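/- Let r ∈ ℚ_{>0} be such that S_r is atomic (i.e., r = 1 or n(r) > 1). Then the following are equivalent: (1) r ∈ ℕ; (2) ρ(S_r) = 1; (3) ρ(S_r) < ∞. Consequently, either ρ(S_r) = 1 or ρ(S_r) = ∞. -/

import Mathlib

open Finsupp
open scoped ENNReal

/-- The Puiseux monoid (rational cyclic semiring) `S_r`, the additive submonoid of `ℚ`
generated by the nonnegative powers of `r`. -/
def S (r : ℚ) : AddSubmonoid ℚ := AddSubmonoid.closure {x : ℚ | ∃ n : ℕ, x = r ^ n}

/-- A factorization of `x` over the powers of `r`: a finitely supported choice of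
coefficients `α i` with `∑ α i * r ^ i = x`. -/
def IsFactorization (r x : ℚ) (α : ℕ →₀ ℕ) : Prop :=
  (α.sum fun i c => (c : ℚ) * r ^ i) = x

/-- The length of a factorization. -/
def flen (α : ℕ →₀ ℕ) : ℕ := α.sum fun _ c => c

/-- The set of lengths of factorizations of `x` over the powers of `r`. -/
def lengthSet (r x : ℚ) : Set ℕ :=
  {t | ∃ α : ℕ →₀ ℕ, IsFactorization r x α ∧ flen α = t}

/-- An atom of `S_r`: a nonzero element that is not the sum of two nonzero elements. -/
def IsAtomS (r a : ℚ) : Prop :=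
  a ∈ S r ∧ a ≠ 0 ∧ ¬ ∃ y z : ℚ, y ∈ S r ∧ z ∈ S r ∧ y ≠ 0 ∧ z ≠ 0 ∧ a = y + z

/-- The set of lengths of `x` as sums of atoms of `S_r`. -/
def atomLengthSet (r x : ℚ) : Set ℕ :=
  {t | ∃ f : Fin t → ℚ, (∀ i, IsAtomS r (f i)) ∧ ∑ i, f i = x}

open Classical in
/-- The elasticity of `x` in `S_r` (as an extended nonnegative real). -/
noncomputable def elast (r x : ℚ) : ℝ≥0∞ :=
  if x = 0 then 1
  else if BddAbove (atomLengthSet r x) then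
    (↑(sSup (atomLengthSet r x)) : ℝ≥0∞) / (↑(sInf (atomLengthSet r x)) : ℝ≥0∞)
  else ⊤

/-- The elasticity of the monoid `S_r`. -/
noncomputable def elastM (r : ℚ) : ℝ≥0∞ := ⨆ x ∈ S r, elast r x


open scoped NNReal

lemma mem_S_iff {r x : ℚ} : x ∈ S r ↔ ∃ α, IsFactorization r x α := by
  constructor
  · intro hx
    induction hx using AddSubmonoid.closure_induction with
    | mem y hy =>
      obtain ⟨n, rfl⟩ := hy
      exact ⟨Finsupp.single n 1, by simp [IsFactorization, Finsupp.sum_single_index]⟩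
    | zero => exact ⟨0, by simp [IsFactorization]⟩
    | add y z _ _ hy hz =>
      obtain ⟨α, hα⟩ := hy; obtain ⟨β, hβ⟩ := hz
      refine ⟨α + β, ?_⟩
      unfold IsFactorization at *
      rw [Finsupp.sum_add_index (by simp) (by intro i _ a b; push_cast; ring)]
      rw [hα, hβ]
  · rintro ⟨α, rfl⟩
    apply AddSubmonoid.sum_mem
    intro i _
    show ((α i : ℚ)) * r ^ i ∈ S r
    rw [← nsmul_eq_mul]
    exact AddSubmonoid.nsmul_mem _ (AddSubmonoid.subset_closure (s := {x : ℚ | ∃ n : ℕ, x = r ^ n}) ⟨i, rfl⟩) _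

lemma flen_add (α β : ℕ →₀ ℕ) : flen (α + β) = flen α + flen β := by
  unfold flen
  rw [Finsupp.sum_add_index (by simp) (by intros; rfl)]

lemma flen_eq_zero {α : ℕ →₀ ℕ} (h : flen α = 0) : α = 0 := by
  unfold flen at h
  rw [Finsupp.sum] at h
  rw [Finset.sum_eq_zero_iff] at h
  ext i
  by_cases hi : i ∈ α.support
  · exact h i hi
  · simpa using Finsupp.notMem_support_iff.mp hi

-- term-level cast identity
lemma hterm_aux {n d : ℕ} (hd : 0 < d) {i N : ℕ} (hi : i ≤ N) :
    (n:ℚ)^i * (d:ℚ)^(N-i) = ((n:ℚ)/(d:ℚ))^i * (d:ℚ)^N := by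
  have h1 : (d:ℚ) ≠ 0 := by positivity
  rw [div_pow, div_mul_eq_mul_div, eq_div_iff (pow_ne_zero i h1), mul_assoc, ← pow_add]
  congr 2
  omega

lemma hNat_aux {n d : ℕ} (hd : 0 < d) {M N K : ℕ} (hMN : M ≤ N) (hK : K ≤ N) (c : ℕ → ℕ)
    (hQ : (∑ i ∈ Finset.range M, (c i : ℚ) * ((n:ℚ)/(d:ℚ)) ^ i) = ((n:ℚ)/(d:ℚ)) ^ K) :
    (∑ i ∈ Finset.range M, c i * (n ^ i * d ^ (N - i))) = n ^ K * d ^ (N - K) := by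
  have EQ : ((∑ i ∈ Finset.range M, c i * (n ^ i * d ^ (N - i)) : ℕ) : ℚ)
      = ((n ^ K * d ^ (N - K) : ℕ) : ℚ) := by
    push_cast
    have h2 : ∀ i ∈ Finset.range M,
        (c i:ℚ) * ((n:ℚ)^i * (d:ℚ)^(N-i)) = ((c i:ℚ) * ((n:ℚ)/(d:ℚ))^i) * (d:ℚ)^N := by
      intro i hi
      rw [hterm_aux hd (le_trans (Nat.le_of_lt_succ (Nat.lt_succ_of_lt (Finset.mem_range.mp hi))) hMN)]
      ring
    calc ∑ i ∈ Finset.range M, (c i:ℚ) * ((n:ℚ)^i * (d:ℚ)^(N-i))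
        = ∑ i ∈ Finset.range M, ((c i:ℚ) * ((n:ℚ)/(d:ℚ))^i) * (d:ℚ)^N :=
          Finset.sum_congr rfl h2
      _ = (∑ i ∈ Finset.range M, (c i:ℚ) * ((n:ℚ)/(d:ℚ))^i) * (d:ℚ)^N :=
          (Finset.sum_mul _ _ _).symm
      _ = ((n:ℚ)/(d:ℚ))^K * (d:ℚ)^N := by rw [hQ]
      _ = (n:ℚ)^K * (d:ℚ)^(N-K) := (hterm_aux hd hK).symm
  exact_mod_cast EQ

lemma key (n d : ℕ) (hn : 2 ≤ n) (hd : 2 ≤ d) (hcop : Nat.Coprime n d) :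
    ∀ (k M : ℕ) (c : ℕ → ℕ), (∀ i, M ≤ i → c i = 0) →
      (∑ i ∈ Finset.range M, (c i : ℚ) * ((n:ℚ)/(d:ℚ)) ^ i) = ((n:ℚ)/(d:ℚ)) ^ k →
      ∀ i, c i = if i = k then 1 else 0 := by
  have hd0 : 0 < d := by omega
  have hdq : (d:ℚ) ≠ 0 := by positivity
  have hnq : (n:ℚ) ≠ 0 := by
    have : 0 < n := by omega
    positivity
  set r : ℚ := (n:ℚ)/(d:ℚ) with hrdef
  have hr0 : 0 < r := by positivity
  have hrne : r ≠ 0 := ne_of_gt hr0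
  have hnd : (n:ℚ) = r * d := by rw [hrdef, div_mul_cancel₀ _ hdq]
  intro k
  induction k with
  | zero =>
    intro M c hc hQ
    have hM : M ≠ 0 := by
      rintro rfl
      rw [Finset.sum_range_zero, pow_zero] at hQ
      exact one_ne_zero hQ.symm
    obtain ⟨M', rfl⟩ := Nat.exists_eq_succ_of_ne_zero hM
    have hNat := hNat_aux hd0 (le_refl (M'+1)) (Nat.zero_le _) c hQ
    rw [Finset.sum_range_succ'] at hNat
    -- hNat : (∑ i ∈ range M', c (i+1) * (n^(i+1) * d^(M'+1-(i+1)))) + c 0 * (n^0*d^(M'+1)) = n^0 * d^(M'+1)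
    have hdvd : n ∣ ∑ i ∈ Finset.range M', c (i+1) * (n ^ (i+1) * d ^ (M'+1 - (i+1))) := by
      apply Finset.dvd_sum
      intro i _
      exact Dvd.dvd.mul_left (Dvd.dvd.mul_right (dvd_pow_self n (Nat.succ_ne_zero i)) _) _
    have hle : c 0 * (n ^ 0 * d ^ (M'+1-0)) ≤ n ^ 0 * d ^ (M'+1-0) := by
      calc c 0 * (n ^ 0 * d ^ (M'+1-0))
          ≤ ∑ i ∈ Finset.range (M'+1), c i * (n ^ i * d ^ (M'+1-i)) :=
            Finset.single_le_sum (f := fun i => c i * (n ^ i * d ^ (M'+1-i)))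
              (fun i _ => Nat.zero_le _) (Finset.mem_range.mpr (Nat.succ_pos _))
        _ = n ^ 0 * d ^ (M'+1-0) := hNat_aux hd0 (le_refl (M'+1)) (Nat.zero_le _) c hQ
    have hc0le : c 0 ≤ 1 := by
      have hpos : 0 < n ^ 0 * d ^ (M'+1-0) := by positivity
      nlinarith [hle]
    have hc0 : c 0 = 1 := by
      rcases Nat.lt_or_ge (c 0) 1 with h | h
      · exfalso
        have hc00 : c 0 = 0 := by omega
        have hsum : (∑ i ∈ Finset.range M', c (i+1) * (n ^ (i+1) * d ^ (M'+1-(i+1))))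
            = n ^ 0 * d ^ (M'+1-0) := by
          rw [hc00, zero_mul, add_zero] at hNat
          exact hNat
        have hdvd2 : n ∣ d ^ (M' + 1) := by
          have h3 : n ∣ n ^ 0 * d ^ (M'+1-0) := hsum ▸ hdvd
          simpa using h3
        have := Nat.Coprime.eq_one_of_dvd (hcop.pow_right _) hdvd2
        omega
      · omega
    -- now the rest are zero, back in ℚ
    rw [Finset.sum_range_succ'] at hQ
    have hrest : ∑ i ∈ Finset.range M', (c (i+1) : ℚ) * r ^ (i+1) = 0 := by
      have h1 : ((c 0 : ℚ)) * r ^ (0:ℕ) = 1 := by rw [hc0]; norm_num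
      have h2 : r ^ (0:ℕ) = 1 := pow_zero r
      linarith [hQ, h1, h2]
    have hzero : ∀ i ∈ Finset.range M', (c (i+1) : ℚ) * r ^ (i+1) = 0 :=
      (Finset.sum_eq_zero_iff_of_nonneg (fun i _ => by positivity)).mp hrest
    intro i
    match i with
    | 0 => simpa using hc0
    | (j+1) =>
      rw [if_neg (Nat.succ_ne_zero j)]
      by_cases hj : j + 1 < M' + 1
      · have h4 := hzero j (Finset.mem_range.mpr (by omega))
        have hrp : r ^ (j+1) ≠ 0 := pow_ne_zero _ hrne
        have h5 : (c (j+1) : ℚ) = 0 := by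
          rcases mul_eq_zero.mp h4 with h | h
          · exact h
          · exact absurd h hrp
        exact_mod_cast h5
      · exact hc _ (by omega)
  | succ k ih =>
    intro M c hc hQ
    have hM : M ≠ 0 := by
      rintro rfl
      rw [Finset.sum_range_zero] at hQ
      exact (pow_ne_zero _ hrne) hQ.symm
    obtain ⟨M', rfl⟩ := Nat.exists_eq_succ_of_ne_zero hM
    set N := M' + 1 + (k + 1) with hNdef
    have hNat := hNat_aux hd0 (by omega : M' + 1 ≤ N) (by omega : k + 1 ≤ N) c hQ
    rw [Finset.sum_range_succ'] at hNat
    have hdvd : n ∣ ∑ i ∈ Finset.range M', c (i+1) * (n ^ (i+1) * d ^ (N-(i+1))) := by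
      apply Finset.dvd_sum
      intro i _
      exact Dvd.dvd.mul_left (Dvd.dvd.mul_right (dvd_pow_self n (Nat.succ_ne_zero i)) _) _
    have hdvdR : n ∣ n ^ (k+1) * d ^ (N-(k+1)) :=
      Dvd.dvd.mul_right (dvd_pow_self n (Nat.succ_ne_zero k)) _
    have hdvd0 : n ∣ c 0 * (n ^ 0 * d ^ (N - 0)) :=
      (Nat.dvd_add_right hdvd).mp (by rw [hNat]; exact hdvdR)
    have hdvdc0 : n ∣ c 0 := by
      have h6 : n ∣ c 0 * d ^ N := by simpa using hdvd0
      exact (Nat.Coprime.dvd_of_dvd_mul_right (hcop.pow_right N) h6)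
    obtain ⟨t, ht⟩ := hdvdc0
    set c' : ℕ → ℕ := fun j => (if j = 0 then t * d else 0) + c (j+1) with hc'def
    have hc' : ∀ i, M' + 1 ≤ i → c' i = 0 := by
      intro i hi
      simp only [hc'def]
      rw [if_neg (by omega), zero_add]
      exact hc _ (by omega)
    have hQ2 := hQ
    rw [Finset.sum_range_succ'] at hQ2
    have hT : r * (∑ j ∈ Finset.range (M'+1), (c' j : ℚ) * r ^ j) = r * r ^ k := by
      rw [Finset.mul_sum]
      have hsplit : ∀ j ∈ Finset.range (M'+1),
          r * ((c' j : ℚ) * r ^ j)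
          = (if j = 0 then (t:ℚ) * d * r else 0) + (c (j+1) : ℚ) * r ^ (j+1) := by
        intro j _
        by_cases h : j = 0
        · subst h
          simp only [hc'def, if_pos rfl]
          push_cast
          ring
        · simp only [hc'def, if_neg h, Nat.zero_add]
          push_cast
          ring
      rw [Finset.sum_congr rfl hsplit, Finset.sum_add_distrib,
        Finset.sum_ite_eq' (Finset.range (M'+1)) 0 (fun _ => (t:ℚ)*d*r),
        if_pos (Finset.mem_range.mpr (Nat.succ_pos M')), Finset.sum_range_succ,
        hc _ (le_refl (M'+1)), Nat.cast_zero, zero_mul, add_zero]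
      have e9 : r ^ (k+1) = r * r ^ k := by rw [pow_succ]; ring
      have e10 : ((c 0:ℚ)) * r ^ (0:ℕ) = (t:ℚ) * d * r := by
        rw [pow_zero, mul_one, ht]
        push_cast
        rw [hnd]
        ring
      linarith [hQ2, e9, e10]
    have hQ' : (∑ j ∈ Finset.range (M'+1), (c' j : ℚ) * r ^ j) = r ^ k :=
      mul_left_cancel₀ hrne hT
    have hC := ih (M'+1) c' hc' hQ'
    have hC0' : t * d + c 1 = if 0 = k then 1 else 0 := by simpa [hc'def] using hC 0
    have ht0 : t = 0 := by
      rcases Nat.eq_zero_or_pos t with h | h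
      · exact h
      · exfalso
        have h12 : 2 ≤ t * d := le_trans hd (Nat.le_mul_of_pos_left d h)
        by_cases hk : 0 = k
        · rw [if_pos hk] at hC0'; omega
        · rw [if_neg hk] at hC0'; omega
    have hc0z : c 0 = 0 := by rw [ht, ht0, mul_zero]
    have hc1 : c 1 = if 1 = k + 1 then 1 else 0 := by
      rw [ht0, zero_mul, zero_add] at hC0'
      by_cases hk : k = 0
      · subst hk; simpa using hC0'
      · rw [if_neg (by omega)] at hC0'
        rw [if_neg (by omega)]
        exact hC0'
    intro i
    match i with
    | 0 =>
      rw [if_neg (by omega : ¬ (0 = k+1))]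
      exact hc0z
    | 1 => exact hc1
    | (j+2) =>
      have h11 : c (j+2) = if j+1 = k then 1 else 0 := by simpa [hc'def] using hC (j+1)
      rw [h11]
      by_cases h : j + 1 = k
      · rw [if_pos h, if_pos (by omega)]
      · rw [if_neg h, if_neg (by omega)]


lemma IsFactorization.add {r y z : ℚ} {α β : ℕ →₀ ℕ}
    (hα : IsFactorization r y α) (hβ : IsFactorization r z β) :
    IsFactorization r (y + z) (α + β) := by
  unfold IsFactorization at *
  rw [Finsupp.sum_add_index (by simp) (by intro i _ a b; push_cast; ring), hα, hβ]

lemma flen_single (k : ℕ) : flen (Finsupp.single k 1) = 1 := by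
  unfold flen
  rw [Finsupp.sum_single_index rfl]

lemma unique_fact {n d : ℕ} (hn : 2 ≤ n) (hd : 2 ≤ d) (hcop : Nat.Coprime n d) (k : ℕ)
    (α : ℕ →₀ ℕ) (h : IsFactorization ((n:ℚ)/(d:ℚ)) (((n:ℚ)/(d:ℚ)) ^ k) α) :
    α = Finsupp.single k 1 := by
  set M := (α.support.sup id) + 1 with hM
  have hsub : α.support ⊆ Finset.range M := by
    intro i hi
    exact Finset.mem_range.mpr (Nat.lt_succ_of_le (Finset.le_sup (f := id) hi))
  have hsum : (∑ i ∈ Finset.range M, (α i : ℚ) * ((n:ℚ)/(d:ℚ)) ^ i) = ((n:ℚ)/(d:ℚ)) ^ k :=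
    (Finsupp.sum_of_support_subset α hsub (fun i c => (c:ℚ) * ((n:ℚ)/(d:ℚ)) ^ i)
      (fun i _ => by simp)).symm.trans h
  have h0 : ∀ i, M ≤ i → α i = 0 := by
    intro i hi
    by_contra hne
    have : i ∈ α.support := Finsupp.mem_support_iff.mpr hne
    have := Finset.mem_range.mp (hsub this)
    omega
  have hkey := key n d hn hd hcop k M (fun i => α i) h0 hsum
  ext i
  have hki : α i = if i = k then 1 else 0 := hkey i
  rw [Finsupp.single_apply, hki]
  by_cases h : i = k
  · rw [if_pos h, if_pos h.symm]
  · rw [if_neg h, if_neg (fun hh => h hh.symm)]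

lemma atom_pow {r : ℚ} (h0 : 0 < r) (hn : 1 < r.num) (hd : 1 < r.den) (k : ℕ) :
    IsAtomS r (r ^ k) := by
  set n := r.num.natAbs with hndef
  set d := r.den with hddef
  have hn2 : 2 ≤ n := by omega
  have hd2 : 2 ≤ d := hd
  have hcop : n.Coprime d := r.reduced
  have hz : ((n:ℕ):ℤ) = r.num := Int.natAbs_of_nonneg (le_of_lt (Rat.num_pos.mpr h0))
  have hnum : ((n:ℕ):ℚ) = (r.num : ℚ) := by exact_mod_cast hz
  have hrq : r = (n:ℚ)/(d:ℚ) := by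
    rw [← Rat.num_div_den r]
    congr 1
    · exact_mod_cast hnum.symm
  refine ⟨AddSubmonoid.subset_closure (s := {x : ℚ | ∃ m : ℕ, x = r ^ m}) ⟨k, rfl⟩,
    pow_ne_zero _ (ne_of_gt h0), ?_⟩
  rintro ⟨y, z, hy, hz, hy0, hz0, hsum⟩
  obtain ⟨α, hα⟩ := mem_S_iff.mp hy
  obtain ⟨β, hβ⟩ := mem_S_iff.mp hz
  have hαβ : IsFactorization r (r ^ k) (α + β) := hsum ▸ hα.add hβ
  rw [hrq] at hαβ
  have huniq : α + β = Finsupp.single k 1 := unique_fact hn2 hd2 hcop k _ hαβ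
  have hflen : flen α + flen β = 1 := by
    rw [← flen_add, huniq, flen_single]
  have h1 : flen α ≠ 0 := by
    intro h
    apply hy0
    have hα' : (α.sum fun i c => (c:ℚ) * r ^ i) = y := hα
    rw [← hα', flen_eq_zero h, Finsupp.sum_zero_index]
  have h2 : flen β ≠ 0 := by
    intro h
    apply hz0
    have hβ' : (β.sum fun i c => (c:ℚ) * r ^ i) = z := hβ
    rw [← hβ', flen_eq_zero h, Finsupp.sum_zero_index]
  omega

lemma elast_ge {r : ℚ} {x : ℚ} (hx : x ≠ 0) {t1 t2 : ℕ} (h1 : t1 ∈ atomLengthSet r x)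
    (h2 : t2 ∈ atomLengthSet r x) : ((t1:ℝ≥0∞)) / (t2:ℝ≥0∞) ≤ elast r x := by
  rw [elast, if_neg hx]
  split_ifs with hb
  · exact ENNReal.div_le_div (by exact_mod_cast le_csSup hb h1) (by exact_mod_cast Nat.sInf_le h2)
  · exact le_top

lemma one_mem_S (r : ℚ) : (1:ℚ) ∈ S r :=
  AddSubmonoid.subset_closure (s := {x : ℚ | ∃ m : ℕ, x = r ^ m}) ⟨0, (pow_zero r).symm⟩

lemma natCast_mem_S (r : ℚ) (N : ℕ) : ((N:ℚ)) ∈ S r := by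
  have h := AddSubmonoid.nsmul_mem _ (one_mem_S r) N
  simpa using h

lemma elastM_top {r : ℚ} (h0 : 0 < r) (hn : 1 < r.num) (hd : 1 < r.den) : elastM r = ⊤ := by
  set n := r.num.natAbs with hndef
  set d := r.den with hddef
  have hn2 : 2 ≤ n := by omega
  have hd2 : 2 ≤ d := hd
  have hz : ((n:ℕ):ℤ) = r.num := Int.natAbs_of_nonneg (le_of_lt (Rat.num_pos.mpr h0))
  have hnum : ((n:ℕ):ℚ) = (r.num : ℚ) := by exact_mod_cast hz
  have hdq : (d:ℚ) ≠ 0 := by positivity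
  have hrq : r = (n:ℚ)/(d:ℚ) := by
    rw [← Rat.num_div_den r]
    congr 1
    exact hnum.symm
  have hcop : n.Coprime d := r.reduced
  have hne : n ≠ d := by
    intro h
    rw [h] at hcop
    have h2 := hcop
    rw [Nat.Coprime, Nat.gcd_self] at h2
    omega
  have hatom : ∀ k, IsAtomS r (r ^ k) := atom_pow h0 hn hd
  have hatom1 : IsAtomS r 1 := by
    have := hatom 0
    rwa [pow_zero] at this
  -- memberships of lengths
  have mem_n : ∀ k : ℕ, n ^ k ∈ atomLengthSet r ((n:ℚ) ^ k) := by
    intro k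
    refine ⟨fun _ => 1, fun _ => hatom1, ?_⟩
    rw [Finset.sum_const, Finset.card_fin]
    push_cast
    ring
  have mem_d : ∀ k : ℕ, d ^ k ∈ atomLengthSet r ((n:ℚ) ^ k) := by
    intro k
    refine ⟨fun _ => r ^ k, fun _ => hatom k, ?_⟩
    rw [Finset.sum_const, Finset.card_fin, hrq, nsmul_eq_mul, div_pow]
    push_cast
    field_simp
  have hxS : ∀ k : ℕ, ((n:ℚ) ^ k) ∈ S r := by
    intro k
    have := natCast_mem_S r (n ^ k)
    push_cast at this
    exact this
  have hxne : ∀ k : ℕ, ((n:ℚ) ^ k) ≠ 0 := by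
    intro k
    have : (0:ℚ) < (n:ℚ) ^ k := by positivity
    exact ne_of_gt this
  -- now conclude
  apply ENNReal.eq_top_of_forall_nnreal_le
  intro s
  set a := max n d with hadef
  set b := min n d with hbdef
  have hb2 : 2 ≤ b := le_min hn2 hd2
  have hba : b < a := by omega
  have hbR : ((b:ℝ≥0)) ≠ 0 := by positivity
  have hq1 : (1:ℝ≥0) < (a:ℝ≥0)/(b:ℝ≥0) := by
    rw [one_lt_div (by positivity : (0:ℝ≥0) < (b:ℝ≥0))]
    exact_mod_cast hba
  obtain ⟨k, hk⟩ := pow_unbounded_of_one_lt s hq1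
  have mem_a : a ^ k ∈ atomLengthSet r ((n:ℚ) ^ k) := by
    rcases max_choice n d with h | h
    · rw [hadef, h]; exact mem_n k
    · rw [hadef, h]; exact mem_d k
  have mem_b : b ^ k ∈ atomLengthSet r ((n:ℚ) ^ k) := by
    rcases min_choice n d with h | h
    · rw [hbdef, h]; exact mem_n k
    · rw [hbdef, h]; exact mem_d k
  have hle1 : ((a ^ k : ℕ) : ℝ≥0∞) / ((b ^ k : ℕ) : ℝ≥0∞) ≤ elast r ((n:ℚ) ^ k) :=
    elast_ge (hxne k) mem_a mem_b
  have hle2 : elast r ((n:ℚ) ^ k) ≤ elastM r :=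
    le_iSup₂ (f := fun x (_ : x ∈ S r) => elast r x) ((n:ℚ) ^ k) (hxS k)
  have hcast : ((((a:ℝ≥0)/(b:ℝ≥0))^k : ℝ≥0) : ℝ≥0∞) = ((a ^ k : ℕ) : ℝ≥0∞) / ((b ^ k : ℕ) : ℝ≥0∞) := by
    rw [ENNReal.coe_pow, ENNReal.coe_div hbR, div_eq_mul_inv, mul_pow, ← ENNReal.inv_pow,
      ← div_eq_mul_inv]
    push_cast
    ring_nf
  calc (s : ℝ≥0∞) ≤ ((((a:ℝ≥0)/(b:ℝ≥0))^k : ℝ≥0) : ℝ≥0∞) := by exact_mod_cast hk.le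
    _ = ((a ^ k : ℕ) : ℝ≥0∞) / ((b ^ k : ℕ) : ℝ≥0∞) := hcast
    _ ≤ elast r ((n:ℚ) ^ k) := hle1
    _ ≤ elastM r := hle2

lemma S_nat_sub {m : ℕ} {x : ℚ} (hx : x ∈ S (m:ℚ)) : ∃ N : ℕ, x = N := by
  induction hx using AddSubmonoid.closure_induction with
  | mem y hy =>
    obtain ⟨i, rfl⟩ := hy
    exact ⟨m ^ i, by push_cast; ring⟩
  | zero => exact ⟨0, by simp⟩
  | add y z _ _ hy hz =>
    obtain ⟨a, rfl⟩ := hy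
    obtain ⟨b, rfl⟩ := hz
    exact ⟨a + b, by push_cast; ring⟩

lemma atom_nat_iff {m : ℕ} (hm : 0 < m) (a : ℚ) : IsAtomS (m:ℚ) a ↔ a = 1 := by
  constructor
  · rintro ⟨hmem, hne, hsplit⟩
    obtain ⟨N, rfl⟩ := S_nat_sub hmem
    have hN0 : N ≠ 0 := by
      intro h
      apply hne
      rw [h, Nat.cast_zero]
    by_contra hne1
    have hN2 : 2 ≤ N := by
      rcases Nat.lt_or_ge N 2 with h | h
      · interval_cases N
        · omega
        · exact absurd rfl hne1
      · exact h
    exact hsplit ⟨1, ((N - 1 : ℕ) : ℚ), one_mem_S _, natCast_mem_S _ _,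
      one_ne_zero, Nat.cast_ne_zero.mpr (by omega),
      by push_cast [Nat.cast_sub (by omega : 1 ≤ N)]; ring⟩
  · rintro rfl
    refine ⟨one_mem_S _, one_ne_zero, ?_⟩
    rintro ⟨y, z, hy, hz, hy0, hz0, hsum⟩
    obtain ⟨Ny, rfl⟩ := S_nat_sub hy
    obtain ⟨Nz, rfl⟩ := S_nat_sub hz
    have hy1 : Ny ≠ 0 := fun h => hy0 (by rw [h, Nat.cast_zero])
    have hz1 : Nz ≠ 0 := fun h => hz0 (by rw [h, Nat.cast_zero])
    have : (1:ℚ) = ((Ny + Nz : ℕ) : ℚ) := by push_cast; linarith [hsum]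
    have h2 : Ny + Nz = 1 := by exact_mod_cast this.symm
    omega

lemma lengths_nat {m : ℕ} (hm : 0 < m) (N : ℕ) : atomLengthSet (m:ℚ) ((N:ℕ):ℚ) = {N} := by
  ext t
  simp only [atomLengthSet, Set.mem_setOf_eq, Set.mem_singleton_iff]
  constructor
  · rintro ⟨f, hf, hsum⟩
    have hone : ∀ i, f i = 1 := fun i => (atom_nat_iff hm _).mp (hf i)
    have : ((t:ℕ):ℚ) = ((N:ℕ):ℚ) := by
      rw [← hsum]
      simp [hone]
    exact_mod_cast this
  · rintro rfl
    exact ⟨fun _ => 1, fun _ => (atom_nat_iff hm 1).mpr rfl, by simp⟩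

lemma elast_nat {m : ℕ} (hm : 0 < m) (N : ℕ) : elast (m:ℚ) ((N:ℕ):ℚ) = 1 := by
  by_cases hN : N = 0
  · subst hN
    rw [elast, if_pos (by norm_num)]
  · have hx0 : ((N:ℕ):ℚ) ≠ 0 := Nat.cast_ne_zero.mpr hN
    rw [elast, if_neg hx0, lengths_nat hm N, if_pos (bddAbove_singleton),
      csSup_singleton, csInf_singleton]
    exact ENNReal.div_self (Nat.cast_ne_zero.mpr hN) (ENNReal.natCast_ne_top N)

lemma elastM_nat {m : ℕ} (hm : 0 < m) : elastM (m:ℚ) = 1 := by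
  apply le_antisymm
  · apply iSup₂_le
    intro x hx
    obtain ⟨N, rfl⟩ := S_nat_sub hx
    exact le_of_eq (elast_nat hm N)
  · have h1 : elast (m:ℚ) ((0:ℕ):ℚ) = 1 := elast_nat hm 0
    calc (1:ℝ≥0∞) = elast (m:ℚ) ((0:ℕ):ℚ) := h1.symm
      _ ≤ elastM (m:ℚ) :=
        le_iSup₂ (f := fun x (_ : x ∈ S (m:ℚ)) => elast (m:ℚ) x) ((0:ℕ):ℚ) (by
          rw [Nat.cast_zero]; exact (S (m:ℚ)).zero_mem)


theorem stmt5 (r : ℚ) (h0 : 0 < r) (hat : r = 1 ∨ 1 < r.num) :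
    ((∃ m : ℕ, r = m) ↔ elastM r = 1) ∧
    ((elastM r = 1) ↔ elastM r < ⊤) ∧
    (elastM r = 1 ∨ elastM r = ⊤) := by
  by_cases hnat : ∃ m : ℕ, r = m
  · obtain ⟨m, hm⟩ := hnat
    have hm0 : 0 < m := by
      rcases Nat.eq_zero_or_pos m with h | h
      · exfalso
        rw [h, Nat.cast_zero] at hm
        exact absurd hm (ne_of_gt h0)
      · exact h
    have h1 : elastM r = 1 := by rw [hm]; exact elastM_nat hm0
    exact ⟨⟨fun _ => h1, fun _ => ⟨m, hm⟩⟩,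
      ⟨fun h => by rw [h]; exact ENNReal.one_lt_top, fun _ => h1⟩, Or.inl h1⟩
  · have hn : 1 < r.num := by
      rcases hat with h | h
      · exact absurd ⟨1, by rw [h]; norm_num⟩ hnat
      · exact h
    have hd : 1 < r.den := by
      rcases Nat.lt_or_ge 1 r.den with h | h
      · exact h
      · exfalso
        have hden : r.den = 1 := by have := r.pos; omega
        apply hnat
        refine ⟨r.num.toNat, ?_⟩
        have h2 : r = (r.num : ℚ) := by
          rw [← Rat.num_div_den r, hden]
          simp
        have h3 : ((r.num.toNat : ℕ) : ℤ) = r.num := Int.toNat_of_nonneg (by positivity)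
        rw [h2]
        exact_mod_cast h3.symm
    have ht : elastM r = ⊤ := elastM_top h0 hn hd
    exact ⟨⟨fun h => (hnat h).elim, fun h => absurd (h.symm.trans ht) ENNReal.one_ne_top⟩,
      ⟨fun h => absurd (h.symm.trans ht) ENNReal.one_ne_top,
       fun h => absurd (ht ▸ h) (lt_irrefl ⊤)⟩, Or.inr ht⟩
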